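/- Let h ∈ ℂ[u,v] be a polynomial in two variables and define the polynomial map f : ℂ² → ℂ³ by f(x,y) = (x, y², y·h(x, y²)). Then the union of the double point set {(x,y) ∈ ℂ² : ∃ (x',y') ∈ ℂ² with (x',y') ≠ (x,y) and f(x',y') = f(x,y)} with the singular set of f (the set of points where the Jacobian matrix of f has rank < 2, i.e., where the differential of f is not injective) is exactly the plane curve {(x,y) ∈ ℂ² : h(x, y²) = 0}. -/

import Mathlib

open MvPolynomial

private lemma gdiff (h : MvPolynomial (Fin 2) ℂ) (p : ℂ × ℂ) :
    DifferentiableAt ℂ (fun p : ℂ × ℂ => eval ![p.1, p.2 ^ 2] h) p := by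
  have key : ∀ i, AnalyticAt ℂ (fun p : ℂ × ℂ => (![p.1, p.2 ^ 2] : Fin 2 → ℂ) i) p := by
    intro i
    fin_cases i
    · simpa using analyticAt_fst
    · simpa using analyticAt_snd.fun_pow 2
  have h2 := (AnalyticAt.aeval_mvPolynomial key h).differentiableAt
  exact h2

private lemma fder (h : MvPolynomial (Fin 2) ℂ) (p : ℂ × ℂ) :
    HasFDerivAt (fun p : ℂ × ℂ => (p.1, p.2 ^ 2, p.2 * eval ![p.1, p.2 ^ 2] h))
      ((ContinuousLinearMap.fst ℂ ℂ ℂ).prod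
        ((p.2 • ContinuousLinearMap.snd ℂ ℂ ℂ + p.2 • ContinuousLinearMap.snd ℂ ℂ ℂ).prod
          (p.2 • fderiv ℂ (fun p : ℂ × ℂ => eval ![p.1, p.2 ^ 2] h) p +
            eval ![p.1, p.2 ^ 2] h • ContinuousLinearMap.snd ℂ ℂ ℂ))) p := by
  have A2 : HasFDerivAt (fun p : ℂ × ℂ => p.2) (ContinuousLinearMap.snd ℂ ℂ ℂ) p :=
    hasFDerivAt_snd
  have A3 : HasFDerivAt (fun p : ℂ × ℂ => p.2 ^ 2)
      (p.2 • ContinuousLinearMap.snd ℂ ℂ ℂ + p.2 • ContinuousLinearMap.snd ℂ ℂ ℂ) p := by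
    simpa [pow_two] using A2.fun_mul A2
  exact hasFDerivAt_fst.prodMk (A3.prodMk (A2.fun_mul (gdiff h p).hasFDerivAt))

/-- Let `h ∈ ℂ[u,v]` and let `f : ℂ² → ℂ³` be the polynomial
map `f(x,y) = (x, y², y·h(x,y²))`. Then the union of the double point set
`{(x,y) : ∃ (x',y') ≠ (x,y), f(x',y') = f(x,y)}` with the singular set of `f`
(the points where the differential of `f` is not injective, i.e. where the
Jacobian matrix has rank `< 2`) is exactly the plane curve `{(x,y) : h(x,y²)=0}`. -/
theorem stmt4 (h : MvPolynomial (Fin 2) ℂ) (f : ℂ × ℂ → ℂ × ℂ × ℂ)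
    (hf : f = fun p => (p.1, p.2 ^ 2, p.2 * MvPolynomial.eval ![p.1, p.2 ^ 2] h)) :
    {p : ℂ × ℂ | (∃ q : ℂ × ℂ, q ≠ p ∧ f q = f p) ∨
        ¬ Function.Injective (fderiv ℂ f p)} =
      {p : ℂ × ℂ | MvPolynomial.eval ![p.1, p.2 ^ 2] h = 0} := by
  subst hf
  ext p
  simp only [Set.mem_setOf_eq]
  have hfd := (fder h p).fderiv
  set Dg := fderiv ℂ (fun p : ℂ × ℂ => eval ![p.1, p.2 ^ 2] h) p with hDg
  set E := eval ![p.1, p.2 ^ 2] h with hE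
  set L := (ContinuousLinearMap.fst ℂ ℂ ℂ).prod
        ((p.2 • ContinuousLinearMap.snd ℂ ℂ ℂ + p.2 • ContinuousLinearMap.snd ℂ ℂ ℂ).prod
          (p.2 • Dg + E • ContinuousLinearMap.snd ℂ ℂ ℂ)) with hL
  have Lapp : ∀ v : ℂ × ℂ, L v = (v.1, p.2 * v.2 + p.2 * v.2, p.2 * Dg v + E * v.2) := by
    intro v
    simp [hL, ContinuousLinearMap.prod_apply, ContinuousLinearMap.add_apply,
      ContinuousLinearMap.coe_smul', Pi.smul_apply, smul_eq_mul]
  constructor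
  · rintro (⟨q, hq, hfq⟩ | hinj)
    · rw [Prod.ext_iff, Prod.ext_iff] at hfq
      obtain ⟨h1, h2, h3⟩ := hfq
      simp only at h1 h2 h3
      rw [h1, h2] at h3
      have hne : q.2 ≠ p.2 := fun hcq => hq (Prod.ext_iff.mpr ⟨h1, hcq⟩)
      have hq2 : q.2 = -p.2 := by
        have hfac : (q.2 - p.2) * (q.2 + p.2) = 0 := by linear_combination h2
        rcases mul_eq_zero.mp hfac with h' | h'
        · exact absurd (sub_eq_zero.mp h') hne
        · exact eq_neg_of_add_eq_zero_left h'
      have hp2 : p.2 ≠ 0 := fun h0 => hne (by rw [hq2, h0, neg_zero])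
      rw [hq2] at h3
      have h4 : 2 * p.2 * E = 0 := by linear_combination -h3
      rcases mul_eq_zero.mp h4 with h' | h'
      · exact absurd h' (by simp [hp2])
      · exact h'
    · by_contra hH
      apply hinj
      rw [hfd]
      have key : ∀ v : ℂ × ℂ, L v = 0 → v = 0 := by
        intro v hv
        rw [Lapp v, Prod.ext_iff, Prod.ext_iff] at hv
        obtain ⟨e1, e2, e3⟩ := hv
        simp only [Prod.fst_zero, Prod.snd_zero] at e1 e2 e3
        have hv2 : v.2 = 0 := by
          by_cases hy : p.2 = 0
          · rw [hy] at e3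
            simp only [zero_mul, zero_add] at e3
            rcases mul_eq_zero.mp e3 with h' | h'
            · exact absurd h' hH
            · exact h'
          · have : p.2 * v.2 = 0 := by linear_combination e2 / 2
            rcases mul_eq_zero.mp this with h' | h'
            · exact absurd h' hy
            · exact h'
        exact Prod.ext_iff.mpr ⟨e1, hv2⟩
      intro a b hab
      have := key (a - b) (by rw [map_sub, hab, sub_self])
      exact sub_eq_zero.mp this
  · intro hH
    by_cases hy : p.2 = 0
    · right
      rw [hfd]
      intro hinj
      have h01 : L (0, 1) = L 0 := by
        rw [map_zero, Lapp (0, 1)]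
        simp [hy, ← hE, hH]
      have := hinj h01
      simp [Prod.ext_iff] at this
    · left
      refine ⟨(p.1, -p.2), ?_, ?_⟩
      · simp only [ne_eq, Prod.ext_iff, not_and]
        intro _ hcq
        exact hy (by linear_combination -hcq / 2)
      · refine Prod.ext_iff.mpr ⟨rfl, Prod.ext_iff.mpr ⟨?_, ?_⟩⟩
        · simp [neg_sq]
        · show -p.2 * eval ![p.1, (-p.2) ^ 2] h = p.2 * eval ![p.1, p.2 ^ 2] h
          rw [neg_sq, ← hE, hH]
          ring
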